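/- A column C of type B or D which can be split is admissible. That is, if there exists a set J_C = {t_1 ≻ ... ≻ t_s} of unbarred letters not occurring in C (neither t_i nor t̄_i occurs in C), chosen greedily as the greatest letters satisfying t_1 ≺ z_1 and t_i ≺ min(t_{i-1}, z_i) where I_C = {z_1 ⪰ ... ⪰ z_s} is the multiset of unbarred letters z ⪯ 0 such that the pair (z, z̄) occurs in C, then C satisfies the admissibility condition N(z) ≤ z for all such pairs and h(C) ≤ n. -/

import Mathlib

/-- Rank of a letter of the alphabet `B_n = {1 ≺ ⋯ ≺ n ≺ 0 ≺ n̄ ≺ ⋯ ≺ 1̄}`,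
where the letter `i` is encoded by the integer `i`, `0` by `0` and `ī` by `-i`. -/
def rankB (n : ℕ) (v : ℤ) : ℤ :=
  if 0 < v then v else if v = 0 then (n : ℤ) + 1 else 2 * (n : ℤ) + 2 + v

/-- `C` is a column of type `B`: letters of `B_n`, strictly increasing from top to
bottom except that the letter `0` may repeat. -/
def IsColB (n : ℕ) (C : List ℤ) : Prop :=
  (∀ v ∈ C, v.natAbs ≤ n) ∧
  C.Chain' (fun a b => rankB n a < rankB n b ∨ (a = 0 ∧ b = 0))

/-- Rank of a letter of `D_n`; the letters `n` and `n̄` share the same rank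
(they are incomparable). -/
def rankD (n : ℕ) (v : ℤ) : ℤ :=
  if 0 < v then v else 2 * (n : ℤ) + v

/-- `C` is a column of type `D`: letters of `D_n` with `x_{i+1} ⋠ x_i`. -/
def IsColD (n : ℕ) (C : List ℤ) : Prop :=
  (∀ v ∈ C, 1 ≤ v.natAbs ∧ v.natAbs ≤ n) ∧
  C.Chain' (fun a b => rankD n a ≤ rankD n b ∧ a ≠ b)

/-- `N(z)`: the number of letters `x` of `C` with `x ⪯ z` or `x ⪰ z̄`,
for an unbarred letter `z`; these are exactly the nonzero letters of absolute
value at most `z`. -/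
def Ncount (n : ℕ) (C : List ℤ) (z : ℤ) : ℕ :=
  (C.filter (fun v => decide (v ≠ 0 ∧ (v.natAbs : ℤ) ≤ z))).length

/-- Kashiwara–Nakashima admissibility: height at most `n` and `N(z) ≤ z` for
every pair `(z, z̄)` with `z ⪯ n` unbarred occurring in `C`. -/
def Admissible (n : ℕ) (C : List ℤ) : Prop :=
  C.length ≤ n ∧
  ∀ z : ℤ, 1 ≤ z → z ≤ (n : ℤ) → z ∈ C → -z ∈ C → (Ncount n C z : ℤ) ≤ z
/-- The multiset `I_C`: one letter `0` for each occurrence of `0` in `C` (listed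
first), followed by the unbarred letters `z` with `(z, z̄)` occurring in `C`, in
decreasing order. -/
def IC (n : ℕ) (C : List ℤ) : List ℤ :=
  List.replicate (C.count 0) 0 ++
    ((List.range n).reverse.filterMap fun k =>
      if ((k + 1 : ℤ) ∈ C ∧ (-((k : ℤ) + 1)) ∈ C) then some ((k : ℤ) + 1) else none)

/-- `GreedyJ n C I J bound` holds when `J` is the greedy choice of substitute
letters for `I`: each `t_i` is the greatest unbarred letter with
`t_i ≺ min (t_{i-1}, z_i)` such that neither `t_i` nor `t̄_i` occurs in `C`
(the letter `0` is treated as larger than every unbarred letter). -/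
def GreedyJ (n : ℕ) (C : List ℤ) : List ℤ → List ℤ → ℤ → Prop
  | [], [], _ => True
  | z :: I, t :: J, bound =>
      (1 ≤ t ∧ t < min bound (if z = 0 then (n : ℤ) + 1 else z) ∧
        t ∉ C ∧ -t ∉ C ∧
        (∀ t' : ℤ, t < t' → t' < min bound (if z = 0 then (n : ℤ) + 1 else z) →
          t' ∈ C ∨ -t' ∈ C)) ∧
      GreedyJ n C I J t
  | _, _, _ => False

/-- A column of type `B` can be split when the greedy choice of the `t_i`
succeeds. -/
def CanSplitB (n : ℕ) (C : List ℤ) : Prop :=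
  ∃ J : List ℤ, GreedyJ n C (IC n C) J ((n : ℤ) + 1)

/-- The type-`B` column `Ĉ` associated to a column of type `D`: each factor
`n̄ n` is replaced by `0 0`. -/
def hatD (n : ℕ) : List ℤ → List ℤ
  | [] => []
  | [a] => [a]
  | a :: b :: rest =>
      if a = -(n : ℤ) ∧ b = (n : ℤ) then 0 :: 0 :: hatD n rest
      else a :: hatD n (b :: rest)

/-- `(lC, rC)` is the split pair of the column `C`: in `rC` each `z̄_i` is
changed into `t̄_i` and in `lC` each `z_i` is changed into `t_i`, reordering
afterwards. -/
def SplitPair (n : ℕ) (C l r : List ℤ) : Prop :=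
  ∃ J : List ℤ, GreedyJ n C (IC n C) J ((n : ℤ) + 1) ∧
    l.Chain' (fun a b => rankB n a < rankB n b) ∧
    (l : Multiset ℤ) + (IC n C : Multiset ℤ) = (C : Multiset ℤ) + (J : Multiset ℤ) ∧
    r.Chain' (fun a b => rankB n a < rankB n b) ∧
    (r : Multiset ℤ) + (((IC n C).map fun z => -z : List ℤ) : Multiset ℤ)
      = (C : Multiset ℤ) + (((J.map fun z => -z : List ℤ)) : Multiset ℤ)


set_option maxHeartbeats 1000000 in
lemma hatD_length (n : ℕ) (C : List ℤ) : (hatD n C).length = C.length := by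
  induction C using hatD.induct n with
  | case1 => simp [hatD]
  | case2 => simp [hatD]
  | case3 a b rest h ih => simp [hatD, h, ih]
  | case4 a b rest h ih => simp [hatD, h, ih]

lemma hatD_filter (n : ℕ) (p : ℤ → Bool) (h0 : p 0 = false) (hn : p (n : ℤ) = false)
    (hn' : p (-(n : ℤ)) = false) (C : List ℤ) : (hatD n C).filter p = C.filter p := by
  induction C using hatD.induct n with
  | case1 => simp [hatD]
  | case2 => simp [hatD]
  | case3 a b rest h ih =>
      obtain ⟨rfl, rfl⟩ := h
      simp [hatD, ih, h0, hn, hn', List.filter_cons]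
  | case4 a b rest h ih =>
      simp [hatD, h, List.filter_cons, ih]

lemma hatD_elems (n : ℕ) (C : List ℤ) (v : ℤ) (hv : v ∈ hatD n C) : v = 0 ∨ v ∈ C := by
  induction C using hatD.induct n with
  | case1 => simp [hatD] at hv
  | case2 a => simp [hatD] at hv; simp [hv]
  | case3 a b rest h ih =>
      rw [hatD, if_pos h] at hv
      simp only [List.mem_cons] at hv
      rcases hv with rfl | rfl | hv
      · exact Or.inl rfl
      · exact Or.inl rfl
      · rcases ih hv with h' | h'
        · exact Or.inl h'
        · right; simp [h']
  | case4 a b rest h ih =>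
      rw [hatD, if_neg h] at hv
      simp only [List.mem_cons] at hv
      rcases hv with rfl | hv
      · right; simp
      · rcases ih hv with h' | h'
        · exact Or.inl h'
        · right; simp only [List.mem_cons] at h' ⊢; tauto

lemma hatD_mem (n : ℕ) (v : ℤ) (h0 : v ≠ 0) (h1 : v ≠ (n : ℤ)) (h2 : v ≠ -(n : ℤ))
    (C : List ℤ) : v ∈ hatD n C ↔ v ∈ C := by
  have := hatD_filter n (fun u => u == v) (by simpa using (Ne.symm h0))
    (by simpa using (Ne.symm h1)) (by simpa using (Ne.symm h2)) C
  constructor <;> intro hv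
  · have : v ∈ C.filter (fun u => u == v) := by
      rw [← this]; exact List.mem_filter.2 ⟨hv, by simp⟩
    exact (List.mem_filter.1 this).1
  · have : v ∈ (hatD n C).filter (fun u => u == v) := by
      rw [this]; exact List.mem_filter.2 ⟨hv, by simp⟩
    exact (List.mem_filter.1 this).1

lemma rankD_to_rankB {n : ℕ} {a b : ℤ} (ha1 : 1 ≤ a.natAbs) (ha2 : a.natAbs ≤ n)
    (hb1 : 1 ≤ b.natAbs) (hb2 : b.natAbs ≤ n)
    (hr : rankD n a ≤ rankD n b) (hne : a ≠ b) (hx : ¬(a = -(n : ℤ) ∧ b = (n : ℤ))) :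
    rankB n a < rankB n b := by
  have hx' : a ≠ -(n : ℤ) ∨ b ≠ (n : ℤ) := by tauto
  unfold rankB rankD at *
  split_ifs at * <;> rcases hx' with h | h <;> omega

lemma hatD_chain (n : ℕ) (C : List ℤ) (helem : ∀ v ∈ C, 1 ≤ v.natAbs ∧ v.natAbs ≤ n)
    (hchain : C.Chain' (fun a b => rankD n a ≤ rankD n b ∧ a ≠ b)) :
    (hatD n C).Chain' (fun a b => rankB n a < rankB n b ∨ (a = 0 ∧ b = 0)) ∧
    ((hatD n C).head? = C.head? ∨
      ((hatD n C).head? = some 0 ∧ C.head? = some (-(n : ℤ)))) := by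
  induction C using hatD.induct n with
  | case1 => simp [hatD]; exact List.isChain_nil
  | case2 a => simp [hatD]; exact List.isChain_singleton a
  | case3 a b rest h ih =>
      obtain ⟨rfl, rfl⟩ := h
      have hn1 : 1 ≤ n := by
        have := helem (-(n:ℤ)) (by simp)
        omega
      have hrest : ∀ v ∈ rest, 1 ≤ v.natAbs ∧ v.natAbs ≤ n := fun v hv =>
        helem v (by simp [hv])
      rw [List.Chain', List.isChain_cons] at hchain
      obtain ⟨hhead, hchain2⟩ := hchain
      have hchain3 := (List.isChain_cons.1 hchain2).2
      obtain ⟨ihc, ihh⟩ := ih hrest hchain3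
      constructor
      · rw [hatD, if_pos ⟨rfl, rfl⟩]
        rw [List.Chain', List.isChain_cons, List.isChain_cons]
        refine ⟨?_, ?_, ihc⟩
        · intro y hy; simp at hy; subst hy; exact Or.inr ⟨rfl, rfl⟩
        · intro y hy
          rcases ihh with heq | ⟨heq, hr0⟩
          · rw [heq] at hy
            have hyr : y ∈ rest := List.mem_of_mem_head? hy
            have hy1 := (hrest y hyr).1
            have hy2 := (hrest y hyr).2
            have hrel := (List.isChain_cons.1 hchain2).1 y hy
            left
            have h1 := hrel.1
            have h2 := hrel.2
            simp only [rankB, rankD] at h1 ⊢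
            split_ifs at h1 ⊢ <;> omega
          · rw [heq] at hy; simp at hy; subst hy; exact Or.inr ⟨rfl, rfl⟩
      · right
        constructor
        · rw [hatD, if_pos ⟨rfl, rfl⟩]; rfl
        · rfl
  | case4 a b rest h ih =>
      have hrest : ∀ v ∈ b :: rest, 1 ≤ v.natAbs ∧ v.natAbs ≤ n := fun v hv =>
        helem v (by simp at hv ⊢; tauto)
      rw [List.Chain', List.isChain_cons] at hchain
      obtain ⟨hhead, hchain2⟩ := hchain
      obtain ⟨ihc, ihh⟩ := ih hrest hchain2
      have ha := helem a (by simp)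
      have hb := helem b (by simp)
      constructor
      · rw [hatD, if_neg h, List.Chain', List.isChain_cons]
        refine ⟨?_, ihc⟩
        intro y hy
        rcases ihh with heq | ⟨heq, hr0⟩
        · rw [heq] at hy; simp at hy; subst hy
          have hrel := hhead b (by rw [List.head?_cons]; rfl)
          exact Or.inl (rankD_to_rankB ha.1 ha.2 hb.1 hb.2 hrel.1 hrel.2 h)
        · rw [heq] at hy; simp at hy; subst hy
          -- b = -n, show rankB n a < rankB n 0
          simp at hr0; subst hr0
          have hrel := hhead (-(n:ℤ)) (by simp)
          have h1 := hrel.1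
          have h2 := hrel.2
          have ha1 := ha.1
          have ha2 := ha.2
          left
          simp only [rankB, rankD] at h1 ⊢
          split_ifs at h1 ⊢ <;> omega
      · left; rw [hatD, if_neg h]; rfl

/-- step: insert a fresh free element. -/
lemma free_card_step (C : List ℤ) {t a : ℤ} (h1 : 1 ≤ t) (h2 : t ≤ a)
    (h3 : t ∉ C) (h4 : -t ∉ C) :
    ((Finset.Icc 1 (t - 1)).filter fun u => u ∉ C ∧ -u ∉ C).card + 1 ≤
      ((Finset.Icc 1 a).filter fun u => u ∉ C ∧ -u ∉ C).card := by
  have hnot : t ∉ (Finset.Icc 1 (t - 1)).filter fun u => u ∉ C ∧ -u ∉ C := by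
    simp only [Finset.mem_filter, Finset.mem_Icc]
    push_neg
    intro h; omega
  have hsub : insert t ((Finset.Icc 1 (t - 1)).filter fun u => u ∉ C ∧ -u ∉ C) ⊆
      (Finset.Icc 1 a).filter fun u => u ∉ C ∧ -u ∉ C := by
    intro u hu
    simp only [Finset.mem_insert, Finset.mem_filter, Finset.mem_Icc] at hu ⊢
    rcases hu with rfl | ⟨⟨g1, g2⟩, g3⟩
    · exact ⟨⟨h1, h2⟩, h3, h4⟩
    · exact ⟨⟨g1, by omega⟩, g3⟩
  calc ((Finset.Icc 1 (t - 1)).filter fun u => u ∉ C ∧ -u ∉ C).card + 1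
      = (insert t ((Finset.Icc 1 (t - 1)).filter fun u => u ∉ C ∧ -u ∉ C)).card := by
        rw [Finset.card_insert_of_notMem hnot]
    _ ≤ _ := Finset.card_le_card hsub

lemma free_card_mono (C : List ℤ) {a b : ℤ} (h : a ≤ b) :
    ((Finset.Icc 1 a).filter fun u => u ∉ C ∧ -u ∉ C).card ≤
      ((Finset.Icc 1 b).filter fun u => u ∉ C ∧ -u ∉ C).card :=
  Finset.card_le_card (Finset.filter_subset_filter _ (Finset.Icc_subset_Icc_right h))

lemma greedy_len (n : ℕ) (C : List ℤ) :
    ∀ (I J : List ℤ) (bound : ℤ), GreedyJ n C I J bound →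
      I.length ≤ ((Finset.Icc 1 (bound - 1)).filter fun t => t ∉ C ∧ -t ∉ C).card := by
  intro I
  induction I with
  | nil => intro J bound _; simp
  | cons z' I' ih =>
    intro J bound h
    cases J with
    | nil => simp [GreedyJ] at h
    | cons t J' =>
      obtain ⟨⟨ht1, ht2, htC, htC', _⟩, hrec⟩ := h
      have htb : t < bound := lt_of_lt_of_le ht2 (min_le_left _ _)
      have hIH := ih J' t hrec
      calc (z' :: I').length = I'.length + 1 := by simp
        _ ≤ ((Finset.Icc 1 (t - 1)).filter fun u => u ∉ C ∧ -u ∉ C).card + 1 := by omega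
        _ ≤ _ := free_card_step C ht1 (by omega) htC htC'

lemma greedy_count (n : ℕ) (C : List ℤ) :
    ∀ (I J : List ℤ) (bound z : ℤ), GreedyJ n C I J bound → 0 < z →
      (I.filter fun m => decide (0 < m ∧ m ≤ z)).length ≤
        ((Finset.Icc 1 (min bound z - 1)).filter fun t => t ∉ C ∧ -t ∉ C).card := by
  intro I
  induction I with
  | nil => intro J bound z _ _; simp
  | cons z' I' ih =>
    intro J bound z h hz
    cases J with
    | nil => simp [GreedyJ] at h
    | cons t J' =>
      obtain ⟨⟨ht1, ht2, htC, htC', _⟩, hrec⟩ := h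
      have htb : t < bound := lt_of_lt_of_le ht2 (min_le_left _ _)
      have hIH := ih J' t z hrec hz
      by_cases hc : 0 < z' ∧ z' ≤ z
      · have htz' : t < z' := by
          have := lt_of_lt_of_le ht2 (min_le_right _ _)
          rwa [if_neg (by omega : ¬ z' = 0)] at this
        have htz : t < z := by omega
        rw [min_eq_left htz.le] at hIH
        have hfil : ((z' :: I').filter fun m => decide (0 < m ∧ m ≤ z)).length =
            (I'.filter fun m => decide (0 < m ∧ m ≤ z)).length + 1 := by
          rw [List.filter_cons, if_pos (by simpa using hc)]
          simp
        rw [hfil]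
        calc (I'.filter fun m => decide (0 < m ∧ m ≤ z)).length + 1
            ≤ ((Finset.Icc 1 (t - 1)).filter fun u => u ∉ C ∧ -u ∉ C).card + 1 := by omega
          _ ≤ _ := free_card_step C ht1 (by omega) htC htC'
      · have hfil : ((z' :: I').filter fun m => decide (0 < m ∧ m ≤ z)).length =
            (I'.filter fun m => decide (0 < m ∧ m ≤ z)).length := by
          rw [List.filter_cons, if_neg (by simpa using hc)]
        rw [hfil]
        refine le_trans hIH (free_card_mono C ?_)
        omega

lemma colB_pairwise {n : ℕ} {C : List ℤ} (h : IsColB n C) :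
    C.Pairwise (fun a b => rankB n a < rankB n b ∨ (a = 0 ∧ b = 0)) := by
  haveI : IsTrans ℤ (fun a b => rankB n a < rankB n b ∨ (a = 0 ∧ b = 0)) := by
    constructor
    intro a b c hab hbc
    rcases hab with hab | ⟨ha, hb⟩ <;> rcases hbc with hbc | ⟨hb', hc⟩
    · exact Or.inl (lt_trans hab hbc)
    · subst hb'; subst hc; exact Or.inl hab
    · subst ha; subst hb; exact Or.inl hbc
    · subst ha; exact Or.inr ⟨rfl, hc⟩
  exact List.isChain_iff_pairwise.mp h.2

lemma ncount_le_SP (n : ℕ) (C : List ℤ) (h : IsColB n C) (z : ℤ) :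
    Ncount n C z ≤ ((Finset.Icc 1 z).filter fun m => m ∈ C).card +
      ((Finset.Icc 1 z).filter fun m => -m ∈ C).card := by
  classical
  set q : ℤ → Bool := fun v => decide (v ≠ 0 ∧ (v.natAbs : ℤ) ≤ z) with hq
  set L : List ℤ := C.filter q with hL
  have hmemL : ∀ v ∈ L, v ∈ C ∧ v ≠ 0 ∧ (v.natAbs : ℤ) ≤ z := by
    intro v hv
    have h1 := List.mem_of_mem_filter hv
    have h2 := List.of_mem_filter hv
    simp only [hq, decide_eq_true_eq] at h2
    exact ⟨h1, h2⟩
  have hnodup : L.Nodup := by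
    have hp : L.Pairwise (fun a b => rankB n a < rankB n b ∨ (a = 0 ∧ b = 0)) :=
      (colB_pairwise h).sublist List.filter_sublist
    refine hp.imp_of_mem ?_
    intro a b ha hb hab
    rcases hab with hab | ⟨ha0, _⟩
    · intro he; subst he; exact lt_irrefl _ hab
    · exact absurd ha0 (hmemL a ha).2.1
  have hsplit : L.length = (L.filter (fun v => decide (0 < v))).length +
      (L.filter (fun v => ! decide (0 < v))).length :=
    List.length_eq_length_filter_add _
  have hpos : (L.filter (fun v => decide (0 < v))).length ≤
      ((Finset.Icc 1 z).filter fun m => m ∈ C).card := by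
    have hnd : (L.filter (fun v => decide (0 < v))).Nodup := hnodup.filter _
    rw [← List.toFinset_card_of_nodup hnd]
    apply Finset.card_le_card
    intro u hu
    rw [List.mem_toFinset] at hu
    have h1 := List.mem_of_mem_filter hu
    have h2 := List.of_mem_filter hu
    simp only [decide_eq_true_eq] at h2
    obtain ⟨h3, h4, h5⟩ := hmemL u h1
    simp only [Finset.mem_filter, Finset.mem_Icc]
    refine ⟨⟨by omega, by omega⟩, h3⟩
  have hneg : (L.filter (fun v => ! decide (0 < v))).length ≤
      ((Finset.Icc 1 z).filter fun m => -m ∈ C).card := by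
    have hnd : ((L.filter (fun v => ! decide (0 < v))).map (fun v => -v)).Nodup :=
      (hnodup.filter _).map (fun a b => by omega)
    have hlen : (L.filter (fun v => ! decide (0 < v))).length =
        ((L.filter (fun v => ! decide (0 < v))).map (fun v => -v)).length := by
      simp
    rw [hlen, ← List.toFinset_card_of_nodup hnd]
    apply Finset.card_le_card
    intro u hu
    rw [List.mem_toFinset, List.mem_map] at hu
    obtain ⟨v, hv, rfl⟩ := hu
    have h1 := List.mem_of_mem_filter hv
    have h2 := List.of_mem_filter hv
    simp only [Bool.not_eq_eq_eq_not, Bool.not_true, decide_eq_false_iff_not] at h2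
    obtain ⟨h3, h4, h5⟩ := hmemL v h1
    simp only [Finset.mem_filter, Finset.mem_Icc, neg_neg]
    refine ⟨⟨by omega, by omega⟩, h3⟩
  calc Ncount n C z = L.length := rfl
    _ = _ := hsplit
    _ ≤ _ := Nat.add_le_add hpos hneg

lemma SP_card (C : List ℤ) (z : ℤ) :
    ((Finset.Icc 1 z).filter fun m => m ∈ C).card +
      ((Finset.Icc 1 z).filter fun m => -m ∈ C).card =
    ((Finset.Icc 1 z).filter fun m => m ∈ C ∨ -m ∈ C).card +
      ((Finset.Icc 1 z).filter fun m => m ∈ C ∧ -m ∈ C).card := by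
  classical
  rw [Finset.filter_or, Finset.filter_and]
  exact (Finset.card_union_add_card_inter _ _).symm

lemma SF_card (C : List ℤ) (z : ℤ) :
    ((Finset.Icc 1 z).filter fun m => m ∈ C ∨ -m ∈ C).card +
      ((Finset.Icc 1 z).filter fun m => m ∉ C ∧ -m ∉ C).card = (Finset.Icc 1 z).card := by
  classical
  have : ((Finset.Icc 1 z).filter fun m => m ∉ C ∧ -m ∉ C) =
      ((Finset.Icc 1 z).filter fun m => ¬(m ∈ C ∨ -m ∈ C)) := by
    apply Finset.filter_congr
    intro m _
    push_neg
    rfl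
  rw [this]
  exact Finset.card_filter_add_card_filter_not _

lemma pairs_le_IC (n : ℕ) (C : List ℤ) (z : ℤ) (hzn : z ≤ (n : ℤ)) :
    ((Finset.Icc 1 z).filter fun m => m ∈ C ∧ -m ∈ C).card ≤
      ((IC n C).filter fun m => decide (0 < m ∧ m ≤ z)).length := by
  classical
  refine le_trans (Finset.card_le_card ?_) (List.toFinset_card_le _)
  intro m hm
  simp only [Finset.mem_filter, Finset.mem_Icc] at hm
  obtain ⟨⟨h1, h2⟩, h3, h4⟩ := hm
  rw [List.mem_toFinset, List.mem_filter]
  constructor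
  · unfold IC
    rw [List.mem_append]
    right
    rw [List.mem_filterMap]
    refine ⟨m - 1, ?_, ?_⟩
    · simp only [bind_pure_comp, List.map_eq_map, List.mem_map, List.mem_reverse,
        List.mem_range]
      exact ⟨(m - 1).toNat, by omega, by omega⟩
    · rw [if_pos (by simpa using ⟨h3, h4⟩)]
      simp
  · simp only [decide_eq_true_eq]
    omega

lemma IC_filter_count (n : ℕ) (C : List ℤ) (z : ℤ) :
    ((IC n C).filter fun m => decide (0 < m ∧ m ≤ z)).length + C.count 0 ≤
      (IC n C).length := by
  unfold IC
  rw [List.filter_append, List.length_append, List.length_append]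
  have h0 : (List.replicate (C.count 0) (0 : ℤ)).filter
      (fun m => decide (0 < m ∧ m ≤ z)) = [] := by
    simp
  rw [h0]
  have := List.length_filter_le (fun m => decide (0 < m ∧ m ≤ z))
    (((List.range n).reverse : List ℕ).filterMap fun k =>
      if ((k + 1 : ℤ) ∈ C ∧ (-((k : ℤ) + 1)) ∈ C) then some ((k : ℤ) + 1) else none)
  simp only [List.length_nil, List.length_replicate]
  omega

lemma admissible_of_splitB (n : ℕ) (C : List ℤ) (hcol : IsColB n C) (hs : CanSplitB n C) :
    Admissible n C := by
  classical
  obtain ⟨J, hJ⟩ := hs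
  have hIccCard : ∀ z : ℤ, 0 ≤ z → (Finset.Icc (1 : ℤ) z).card = z.toNat := by
    intro z hz
    rw [Int.card_Icc]
    omega
  constructor
  · -- height
    have h1 := ncount_le_SP n C hcol (n : ℤ)
    have h2 : C.length ≤ C.count 0 + Ncount n C (n : ℤ) := by
      have hsplit : C.length =
          (C.filter (fun v => decide (v ≠ 0 ∧ (v.natAbs : ℤ) ≤ (n : ℤ)))).length +
          (C.filter (fun v => ! decide (v ≠ 0 ∧ (v.natAbs : ℤ) ≤ (n : ℤ)))).length :=
        List.length_eq_length_filter_add _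
      have hzero : (C.filter (fun v => ! decide (v ≠ 0 ∧ (v.natAbs : ℤ) ≤ (n : ℤ)))).length ≤
          C.count 0 := by
        set q : ℤ → Bool := fun v => ! decide (v ≠ 0 ∧ (v.natAbs : ℤ) ≤ (n : ℤ)) with hqdef
        have hall : ∀ v ∈ C.filter q, 0 = v := by
          intro v hv
          have h1 := List.mem_of_mem_filter hv
          have h2 := List.of_mem_filter hv
          simp only [hqdef, Bool.not_eq_eq_eq_not, Bool.not_true, decide_eq_false_iff_not] at h2
          have h3 := hcol.1 v h1
          by_contra hne
          exact h2 ⟨fun h => hne h.symm, by omega⟩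
        have hc : (C.filter q).count 0 = (C.filter q).length := List.count_eq_length.2 hall
        have hle : (C.filter q).count 0 ≤ C.count 0 := List.filter_sublist.count_le _
        omega
      unfold Ncount
      omega
    have h3 := pairs_le_IC n C (n : ℤ) le_rfl
    have h4 := IC_filter_count n C (n : ℤ)
    have h5 := greedy_len n C (IC n C) J ((n : ℤ) + 1) hJ
    rw [show ((n : ℤ) + 1 - 1) = (n : ℤ) by ring] at h5
    have h6 := SP_card C (n : ℤ)
    have h7 := SF_card C (n : ℤ)
    rw [hIccCard (n : ℤ) (by omega)] at h7
    omega
  · intro z hz1 hz2 hzC hzC'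
    have h1 := ncount_le_SP n C hcol z
    have h6 := SP_card C z
    have h3 := pairs_le_IC n C z hz2
    have h4 := greedy_count n C (IC n C) J ((n : ℤ) + 1) z hJ (by omega)
    rw [min_eq_right (by omega : z ≤ (n : ℤ) + 1)] at h4
    have h5 := free_card_mono C (by omega : z - 1 ≤ z)
    have h7 := SF_card C z
    rw [hIccCard z (by omega)] at h7
    omega


/-- A column `C` of type `B` or `D` which can be split is
admissible (for type `D`, `C` can be split when the associated type-`B` column
`Ĉ` can be split). -/
theorem stmt2 (n : ℕ) (C : List ℤ) :
    (IsColB n C → CanSplitB n C → Admissible n C) ∧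
    (IsColD n C → CanSplitB n (hatD n C) → Admissible n C) := by
  constructor
  · exact fun h1 h2 => admissible_of_splitB n C h1 h2
  · intro hD hs
    have hB : IsColB n (hatD n C) := by
      constructor
      · intro v hv
        rcases hatD_elems n C v hv with rfl | hvC
        · simp
        · exact (hD.1 v hvC).2
      · exact (hatD_chain n C hD.1 hD.2).1
    have hAdm := admissible_of_splitB n _ hB hs
    have hlen := hAdm.1
    rw [hatD_length] at hlen
    refine ⟨hlen, ?_⟩
    intro z hz1 hz2 hzC hzC'
    rcases eq_or_lt_of_le hz2 with heq | hlt
    · -- z = n: Ncount n C z = C.length ≤ n = z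
      have hall : C.filter (fun v => decide (v ≠ 0 ∧ (v.natAbs : ℤ) ≤ z)) = C := by
        apply List.filter_eq_self.2
        intro v hv
        have h1 := (hD.1 v hv).1
        have h2 := (hD.1 v hv).2
        simp only [decide_eq_true_eq]
        exact ⟨fun h => by omega, by omega⟩
      have hN : Ncount n C z = C.length := by rw [Ncount, hall]
      omega
    · -- z < n
      have hmem1 : z ∈ hatD n C :=
        (hatD_mem n z (by omega) (by omega) (by omega) C).2 hzC
      have hmem2 : -z ∈ hatD n C :=
        (hatD_mem n (-z) (by omega) (by omega) (by omega) C).2 hzC'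
      have hNeq : Ncount n C z = Ncount n (hatD n C) z := by
        unfold Ncount
        rw [hatD_filter n _ (by simp) ?_ ?_ C]
        · simp only [decide_eq_false_iff_not, not_and]
          intro _
          simp only [Int.natAbs_natCast]
          omega
        · simp only [decide_eq_false_iff_not, not_and]
          intro _
          rw [Int.natAbs_neg]
          simp only [Int.natAbs_natCast]
          omega
      rw [hNeq]
      exact hAdm.2 z hz1 hz2 hmem1 hmem2
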